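/- Let (X, d) be an infinite compact metric space. Then the functional I : M(X) → ℝ is discontinuous at every point of M(X) with respect to the weak-* topology, and the bilinear functional I(·,·) : M(X) × M(X) → ℝ is discontinuous at every point of M(X) × M(X) (with the product of the weak-* topologies). -/

import Mathlib

open MeasureTheory Filter Topology

/-- `dmu μ x = ∫ d(x,y) dμ(y)`, defined via the Jordan decomposition of the
finite signed Borel measure `μ`. -/
noncomputable def dmu {X : Type*} [MetricSpace X] [MeasurableSpace X]
    (μ : SignedMeasure X) (x : X) : ℝ :=
  (∫ y, dist x y ∂μ.toJordanDecomposition.posPart) -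
  (∫ y, dist x y ∂μ.toJordanDecomposition.negPart)

/-- `Ibil μ ν = ∫∫ d(x,y) dμ(x)dν(y)`. -/
noncomputable def Ibil {X : Type*} [MetricSpace X] [MeasurableSpace X]
    (μ ν : SignedMeasure X) : ℝ :=
  (∫ x, dmu ν x ∂μ.toJordanDecomposition.posPart) -
  (∫ x, dmu ν x ∂μ.toJordanDecomposition.negPart)

/-- The energy integral `I(μ) = I(μ, μ)`. -/
noncomputable def Ien {X : Type*} [MetricSpace X] [MeasurableSpace X]
    (μ : SignedMeasure X) : ℝ := Ibil μ μ

/-- Integration of a function against a signed measure, via Jordan decomposition. -/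
noncomputable def integSM {X : Type*} [MeasurableSpace X] (μ : SignedMeasure X)
    (f : X → ℝ) : ℝ :=
  (∫ x, f x ∂μ.toJordanDecomposition.posPart) -
  (∫ x, f x ∂μ.toJordanDecomposition.negPart)

/-- The weak-* topology on the space of finite signed Borel measures on `X`,
i.e. the topology induced by the maps `μ ↦ ∫ f dμ` for `f ∈ C(X, ℝ)`. -/
noncomputable def weakStar (X : Type*) [TopologicalSpace X] [MeasurableSpace X] :
    TopologicalSpace (SignedMeasure X) :=
  TopologicalSpace.induced
    (fun μ : SignedMeasure X => fun f : C(X, ℝ) => integSM μ f) inferInstance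

open Matrix
set_option linter.unusedSectionVars false
section MT
variable {X : Type*} [MetricSpace X] [CompactSpace X] [MeasurableSpace X] [BorelSpace X]

lemma cont_integrable {f : X → ℝ} (hf : Continuous f) (P : Measure X) [IsFiniteMeasure P] :
    Integrable f P :=
  hf.integrable_of_hasCompactSupport (isClosed_tsupport f).isCompact

lemma jd_rep (μ : SignedMeasure X) :
    μ = μ.toJordanDecomposition.posPart.toSignedMeasure -
      μ.toJordanDecomposition.negPart.toSignedMeasure := by
  conv_lhs => rw [← μ.toSignedMeasure_toJordanDecomposition]
  rfl

lemma integSM_rep (μ : SignedMeasure X) (P N : Measure X) [IsFiniteMeasure P] [IsFiniteMeasure N]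
    (h : μ = P.toSignedMeasure - N.toSignedMeasure) {f : X → ℝ} (hf : Continuous f) :
    integSM μ f = ∫ x, f x ∂P - ∫ x, f x ∂N := by
  set Pj := μ.toJordanDecomposition.posPart with hPj
  set Nj := μ.toJordanDecomposition.negPart with hNj
  have hkey : Pj + N = P + Nj := by
    ext s hs
    have h1 : μ s = (P s).toReal - (N s).toReal := by
      rw [h]; simp [measureReal_def, VectorMeasure.sub_apply, Measure.toSignedMeasure_apply_measurable hs, hs]
    have h2 : μ s = (Pj s).toReal - (Nj s).toReal := by
      conv_lhs => rw [jd_rep μ]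
      simp [measureReal_def, VectorMeasure.sub_apply, Measure.toSignedMeasure_apply_measurable hs, hs, ← hPj, ← hNj]
    have h3 : (Pj s).toReal + (N s).toReal = (P s).toReal + (Nj s).toReal := by linarith
    have h4 : ((Pj s).toReal + (N s).toReal) = ((Pj + N) s).toReal := by
      simp [Measure.add_apply, ENNReal.toReal_add (measure_ne_top _ _) (measure_ne_top _ _)]
    have h5 : ((P s).toReal + (Nj s).toReal) = ((P + Nj) s).toReal := by
      simp [Measure.add_apply, ENNReal.toReal_add (measure_ne_top _ _) (measure_ne_top _ _)]
    have h6 : ((Pj + N) s).toReal = ((P + Nj) s).toReal := by rw [← h4, ← h5]; exact h3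
    exact (ENNReal.toReal_eq_toReal_iff' (measure_ne_top _ _) (measure_ne_top _ _)).mp h6
  have hint : (∫ x, f x ∂Pj) + (∫ x, f x ∂N) = (∫ x, f x ∂P) + (∫ x, f x ∂Nj) := by
    rw [← integral_add_measure (cont_integrable hf _) (cont_integrable hf _),
      ← integral_add_measure (cont_integrable hf _) (cont_integrable hf _), hkey]
  have : integSM μ f = (∫ x, f x ∂Pj) - (∫ x, f x ∂Nj) := rfl
  rw [this]; linarith

lemma ofReal_sub_ofReal (x : ℝ) :
    (ENNReal.ofReal x).toReal - (ENNReal.ofReal (-x)).toReal = x := by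
  rcases le_total 0 x with h | h
  · rw [ENNReal.toReal_ofReal h, ENNReal.ofReal_of_nonpos (by linarith)]; simp
  · rw [ENNReal.ofReal_of_nonpos h, ENNReal.toReal_ofReal (by linarith)]; simp

noncomputable def pmeas {n : ℕ} (p : Fin n → X) (a : Fin n → ℝ) : Measure X :=
  ∑ j, ENNReal.ofReal (a j) • Measure.dirac (p j)

instance pmeas_finite {n : ℕ} (p : Fin n → X) (a : Fin n → ℝ) :
    IsFiniteMeasure (pmeas p a) := by
  constructor
  rw [pmeas, Measure.finset_sum_apply]
  refine ENNReal.sum_lt_top.mpr fun j _ => ?_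
  simp [Measure.smul_apply]

instance smul_dirac_finite (r : ℝ) (x : X) :
    IsFiniteMeasure (ENNReal.ofReal r • Measure.dirac x) := by
  constructor
  rw [Measure.smul_apply]
  simp [ENNReal.ofReal_lt_top]

noncomputable def diracSM {n : ℕ} (p : Fin n → X) (a : Fin n → ℝ) : SignedMeasure X :=
  (pmeas p a).toSignedMeasure - (pmeas p (fun j => - a j)).toSignedMeasure

lemma integral_pmeas {n : ℕ} (p : Fin n → X) (a : Fin n → ℝ) {f : X → ℝ} (hf : Continuous f) :
    ∫ x, f x ∂(pmeas p a) = ∑ j, (ENNReal.ofReal (a j)).toReal * f (p j) := by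
  rw [pmeas, integral_finset_sum_measure (fun j _ => cont_integrable hf _)]
  refine Finset.sum_congr rfl fun j _ => ?_
  rw [integral_smul_measure, integral_dirac]
  simp

lemma integSM_add_diracSM (μ : SignedMeasure X) {n : ℕ} (p : Fin n → X) (a : Fin n → ℝ)
    {f : X → ℝ} (hf : Continuous f) :
    integSM (μ + diracSM p a) f = integSM μ f + ∑ j, a j * f (p j) := by
  have hrep : μ + diracSM p a =
      (μ.toJordanDecomposition.posPart + pmeas p a).toSignedMeasure -
      ((μ.toJordanDecomposition.negPart + pmeas p (fun j => -a j)).toSignedMeasure) := by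
    rw [Measure.toSignedMeasure_add, Measure.toSignedMeasure_add]
    conv_lhs => rw [jd_rep μ]
    unfold diracSM; abel
  rw [integSM_rep _ _ _ hrep hf, integral_add_measure (cont_integrable hf _) (cont_integrable hf _),
    integral_add_measure (cont_integrable hf _) (cont_integrable hf _),
    integral_pmeas _ _ hf, integral_pmeas _ _ hf]
  have h0 : integSM μ f = (∫ x, f x ∂μ.toJordanDecomposition.posPart) -
      (∫ x, f x ∂μ.toJordanDecomposition.negPart) := rfl
  have hsum : ∑ j, a j * f (p j) = (∑ j, (ENNReal.ofReal (a j)).toReal * f (p j)) -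
      ∑ j, (ENNReal.ofReal (-a j)).toReal * f (p j) := by
    rw [← Finset.sum_sub_distrib]
    exact Finset.sum_congr rfl fun j _ => by rw [← sub_mul, ofReal_sub_ofReal]
  rw [h0, hsum]
  ring

lemma cont_intdist (P : Measure X) [IsFiniteMeasure P] :
    Continuous fun x => ∫ y, dist x y ∂P := by
  refine LipschitzWith.continuous (K := (P Set.univ).toNNReal) ?_
  refine lipschitzWith_iff_dist_le_mul.mpr fun x x' => ?_
  have hint : ∀ z : X, Integrable (fun y => dist z y) P :=
    fun z => cont_integrable (Continuous.dist continuous_const continuous_id) P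
  rw [Real.dist_eq, ← integral_sub (hint x) (hint x')]
  calc |∫ y, (dist x y - dist x' y) ∂P| ≤ ∫ y, |dist x y - dist x' y| ∂P := by
        simpa using norm_integral_le_integral_norm (μ := P) (fun y => dist x y - dist x' y)
    _ ≤ ∫ _, dist x x' ∂P := by
        refine integral_mono ((hint x).sub (hint x')).abs (integrable_const _) fun y => ?_
        exact abs_dist_sub_le x x' y
    _ = (P Set.univ).toReal * dist x x' := by rw [integral_const]; simp [smul_eq_mul, measureReal_def]
    _ = (P Set.univ).toNNReal * dist x x' := rfl

lemma cont_dmu (ν : SignedMeasure X) : Continuous (dmu ν) := by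
  have h1 := cont_intdist ν.toJordanDecomposition.posPart
  have h2 := cont_intdist ν.toJordanDecomposition.negPart
  exact h1.sub h2

lemma dmu_eq (ν : SignedMeasure X) (x : X) : dmu ν x = integSM ν (fun y => dist x y) := rfl

lemma Ibil_eq (μ ν : SignedMeasure X) : Ibil μ ν = integSM μ (dmu ν) := rfl

lemma integSM_fun_add (μ : SignedMeasure X) {f g : X → ℝ} (hf : Continuous f)
    (hg : Continuous g) :
    integSM μ (fun x => f x + g x) = integSM μ f + integSM μ g := by
  unfold integSM
  rw [integral_add (cont_integrable hf _) (cont_integrable hg _),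
    integral_add (cont_integrable hf _) (cont_integrable hg _)]
  ring

lemma integSM_fun_sum (μ : SignedMeasure X) {m : ℕ} (g : Fin m → X → ℝ)
    (hg : ∀ j, Continuous (g j)) :
    integSM μ (fun x => ∑ j, g j x) = ∑ j, integSM μ (g j) := by
  unfold integSM
  rw [integral_finset_sum _ (fun j _ => cont_integrable (hg j) _),
    integral_finset_sum _ (fun j _ => cont_integrable (hg j) _), ← Finset.sum_sub_distrib]

lemma integSM_fun_mul (μ : SignedMeasure X) (r : ℝ) (f : X → ℝ) :
    integSM μ (fun x => r * f x) = r * integSM μ f := by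
  unfold integSM
  rw [integral_const_mul, integral_const_mul]
  ring

lemma Ibil_expand (μ₁ μ₂ : SignedMeasure X) {n : ℕ} (p : Fin n → X) (a : Fin n → ℝ) :
    Ibil (μ₁ + diracSM p a) (μ₂ + diracSM p a) = Ibil μ₁ μ₂
      + ∑ j, a j * integSM μ₁ (fun x => dist x (p j))
      + ∑ i, a i * dmu μ₂ (p i)
      + ∑ i, ∑ j, a i * a j * dist (p i) (p j) := by
  have hdistc : ∀ z : X, Continuous fun x : X => dist x z :=
    fun z => Continuous.dist continuous_id continuous_const
  have hd : dmu (μ₂ + diracSM p a) = fun x => dmu μ₂ x + ∑ j, a j * dist x (p j) := by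
    funext x
    have hfc : Continuous fun y : X => dist x y := Continuous.dist continuous_const continuous_id
    rw [dmu_eq, integSM_add_diracSM μ₂ p a hfc, ← dmu_eq]
  have hcont2 : Continuous (dmu (μ₂ + diracSM p a)) := cont_dmu _
  rw [Ibil_eq, integSM_add_diracSM μ₁ p a hcont2, hd]
  have hsum : ∀ i, dmu μ₂ (p i) + ∑ j, a j * dist (p i) (p j)
      = dmu μ₂ (p i) + ∑ j, a j * dist (p i) (p j) := fun i => rfl
  have hc1 : Continuous (dmu μ₂) := cont_dmu _
  have hc2 : Continuous fun x => ∑ j, a j * dist x (p j) := by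
    refine continuous_finset_sum _ fun j _ => ?_
    exact continuous_const.mul (hdistc (p j))
  rw [integSM_fun_add μ₁ hc1 hc2]
  have h3 : integSM μ₁ (fun x => ∑ j, a j * dist x (p j))
      = ∑ j, a j * integSM μ₁ (fun x => dist x (p j)) := by
    rw [integSM_fun_sum μ₁ (fun j => fun x => a j * dist x (p j))
      (fun j => continuous_const.mul (hdistc (p j)))]
    exact Finset.sum_congr rfl fun j _ => integSM_fun_mul μ₁ (a j) _
  rw [h3, ← Ibil_eq]
  have h4 : ∑ i, a i * (dmu μ₂ (p i) + ∑ j, a j * dist (p i) (p j))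
      = (∑ i, a i * dmu μ₂ (p i)) + ∑ i, ∑ j, a i * a j * dist (p i) (p j) := by
    rw [← Finset.sum_add_distrib]
    refine Finset.sum_congr rfl fun i _ => ?_
    rw [mul_add, Finset.mul_sum]
    congr 1
    exact Finset.sum_congr rfl fun j _ => by ring
  rw [h4]
  ring


end MT
lemma exists_good_c {n k : ℕ} (hk : 2 * k + 2 ≤ n) (D : Matrix (Fin n) (Fin n) ℝ)
    (hsym : Dᵀ = D) (hdet : D.det ≠ 0) (g : Fin k → Fin n → ℝ) :
    ∃ c : Fin n → ℝ, (∀ i, ∑ j, c j * g i j = 0) ∧ (∑ i, ∑ j, c i * c j * D i j) ≠ 0 := by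
  classical
  by_contra hcon
  push_neg at hcon
  set E := EuclideanSpace ℝ (Fin n) with hE
  let le : E ≃ₗ[ℝ] (Fin n → ℝ) := WithLp.linearEquiv 2 ℝ (Fin n → ℝ)
  let gE : Fin k → E := fun i => le.symm (g i)
  set K : Submodule ℝ E := (Submodule.span ℝ (Set.range gE))ᗮ with hK
  -- inner products are dot products
  have hinner : ∀ u v : E, (inner ℝ u v : ℝ) = ∑ j, (le u) j * (le v) j := by
    intro u v
    rw [PiLp.inner_apply]
    refine Finset.sum_congr rfl fun j _ => ?_
    simp [RCLike.inner_apply, starRingEnd_apply]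
    exact mul_comm _ _
  -- quadratic form as dot products
  have hQdot : ∀ c : Fin n → ℝ, (∑ i, ∑ j, c i * c j * D i j) = c ⬝ᵥ (D *ᵥ c) := by
    intro c
    rw [dotProduct]
    refine Finset.sum_congr rfl fun i _ => ?_
    rw [Matrix.mulVec, dotProduct, Finset.mul_sum]
    exact Finset.sum_congr rfl fun j _ => by ring
  -- constraints hold on K
  have hQ0 : ∀ c ∈ K, (le c) ⬝ᵥ (D *ᵥ (le c)) = 0 := by
    intro c hc
    rw [← hQdot]
    refine hcon (le c) fun i => ?_
    have h1 : (inner ℝ (gE i) c : ℝ) = 0 :=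
      (Submodule.mem_orthogonal (Submodule.span ℝ (Set.range gE)) c).mp hc (gE i)
        (Submodule.subset_span (Set.mem_range_self i))
    rw [hinner] at h1
    rw [← h1]
    refine Finset.sum_congr rfl fun j _ => ?_
    have : le (gE i) = g i := le.apply_symm_apply (g i)
    rw [this]
    ring
  have hBsymm : ∀ u v : Fin n → ℝ, u ⬝ᵥ (D *ᵥ v) = v ⬝ᵥ (D *ᵥ u) := by
    intro u v
    rw [Matrix.dotProduct_mulVec]
    have : u ᵥ* D = D *ᵥ u := by
      conv_lhs => rw [← hsym]
      exact Matrix.vecMul_transpose D u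
    rw [this, dotProduct_comm]
  -- polarization : B vanishes on K
  have hB0 : ∀ u ∈ K, ∀ v ∈ K, (le u) ⬝ᵥ (D *ᵥ (le v)) = 0 := by
    intro u hu v hv
    have h1 := hQ0 (u + v) (K.add_mem hu hv)
    have h2 := hQ0 u hu
    have h3 := hQ0 v hv
    have hle : le (u + v) = le u + le v := le.map_add u v
    rw [hle] at h1
    simp only [Matrix.mulVec_add, dotProduct_add, add_dotProduct] at h1
    have hsB := hBsymm (le u) (le v)
    linarith
  -- the linear map
  let T : E →ₗ[ℝ] E := le.symm.toLinearMap ∘ₗ (Matrix.mulVecLin D) ∘ₗ le.toLinearMap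
  have hTv : ∀ x : E, le (T x) = D *ᵥ (le x) := by
    intro x
    show le (le.symm (D.mulVecLin (le x))) = _
    rw [le.apply_symm_apply, Matrix.mulVecLin_apply]
  have hTinj : Function.Injective T := by
    intro u v huv
    have h1 : D *ᵥ (le u) = D *ᵥ (le v) := by
      rw [← hTv, ← hTv, huv]
    have h2 : D *ᵥ (le u - le v) = 0 := by
      rw [Matrix.mulVec_sub, h1, sub_self]
    by_contra hne
    have hne' : le u - le v ≠ 0 := by
      intro h0
      exact hne (le.injective (sub_eq_zero.mp h0))
    exact hdet (Matrix.exists_mulVec_eq_zero_iff.mp ⟨le u - le v, hne', h2⟩)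
  have hmap : Submodule.map T K ≤ Kᗮ := by
    rintro w ⟨v, hv, rfl⟩
    rw [Submodule.mem_orthogonal]
    intro u hu
    rw [hinner]
    rw [hTv v]
    exact hB0 u hu v hv
  -- dimension count
  haveI : FiniteDimensional ℝ E := by infer_instance
  have hdim1 : Module.finrank ℝ K + Module.finrank ℝ Kᗮ = n := by
    rw [Submodule.finrank_add_finrank_orthogonal K]
    exact finrank_euclideanSpace_fin
  have hdim2 : Module.finrank ℝ (Submodule.map T K) = Module.finrank ℝ K :=
    (Submodule.equivMapOfInjective T hTinj K).finrank_eq.symm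
  have hdim3 : Module.finrank ℝ K ≤ Module.finrank ℝ Kᗮ := by
    rw [← hdim2]
    exact Submodule.finrank_mono hmap
  have hdim4 : Module.finrank ℝ Kᗮ ≤ k := by
    rw [hK, Submodule.orthogonal_orthogonal]
    calc Module.finrank ℝ (Submodule.span ℝ (Set.range gE))
        ≤ (Set.range gE).toFinset.card := finrank_span_le_card _
      _ ≤ k := by
          rw [Set.toFinset_range]
          exact le_trans (Finset.card_image_le) (by simp)
  omega
set_option maxHeartbeats 1000000
section Pts
variable {X : Type*} [MetricSpace X]

lemma exists_near (z : X) (hz : (𝓝[≠] z).NeBot) :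
    ∀ ε > (0:ℝ), ∃ y, y ≠ z ∧ dist y z < ε := by
  intro ε hε
  have hmem : (Metric.ball z ε ∩ {z}ᶜ) ∈ 𝓝[≠] z :=
    Filter.inter_mem (nhdsWithin_le_nhds (Metric.ball_mem_nhds z hε)) self_mem_nhdsWithin
  obtain ⟨y, hy1, hy2⟩ := hz.nonempty_of_mem hmem
  exact ⟨y, hy2, Metric.mem_ball.mp hy1⟩

lemma exists_inv_points [CompactSpace X] [Infinite X] (m : ℕ) :
    ∃ p : Fin (m + 2) → X, (Matrix.of fun i j => dist (p i) (p j)).det ≠ 0 := by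
  obtain ⟨z, hz⟩ := exists_nhds_ne_neBot X
  suffices h : ∃ p : Fin (m + 2) → X, p 0 = z ∧
      (Matrix.of fun i j => dist (p i) (p j)).det ≠ 0 by
    obtain ⟨p, _, hp⟩ := h; exact ⟨p, hp⟩
  induction m with
  | zero =>
    obtain ⟨y, hy, -⟩ := exists_near z hz 1 one_pos
    refine ⟨![z, y], rfl, ?_⟩
    rw [Matrix.det_fin_two]
    simp only [Matrix.of_apply, Matrix.cons_val_zero, Matrix.cons_val_one, Matrix.head_cons]
    rw [dist_self, dist_self]
    have : (0:ℝ) < dist z y := dist_pos.mpr (fun h => hy h.symm)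
    rw [dist_comm y z]
    nlinarith
  | succ m ih =>
    obtain ⟨p, hp0, hdet⟩ := ih
    set A : Matrix (Fin (m + 2)) (Fin (m + 2)) ℝ := Matrix.of fun i j => dist (p i) (p j)
      with hA
    have hAunit : IsUnit A.det := isUnit_iff_ne_zero.mpr hdet
    have hsymA : Aᵀ = A := by
      ext i j; simp [hA, Matrix.transpose_apply, dist_comm]
    have hsymAinv : (A⁻¹)ᵀ = A⁻¹ := by
      rw [Matrix.transpose_nonsing_inv, hsymA]
    set M : ℝ := ∑ i, ∑ j, |A⁻¹ i j| with hM
    have hM0 : 0 ≤ M :=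
      Finset.sum_nonneg fun i _ => Finset.sum_nonneg fun j _ => abs_nonneg _
    obtain ⟨y, hy, hylt⟩ := exists_near z hz (1 / (M + 1)) (by positivity)
    have hρ : 0 < dist y z := dist_pos.mpr hy
    set q : Fin (m + 3) → X := Fin.snoc p y with hq
    have hq0 : q 0 = z := by
      have : (0 : Fin (m + 3)) = Fin.castSucc 0 := rfl
      rw [this, hq, Fin.snoc_castSucc, hp0]
    refine ⟨q, hq0, ?_⟩
    intro hdetB
    obtain ⟨v, hv0, hveq⟩ := Matrix.exists_mulVec_eq_zero_iff.mpr hdetB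
    set B : Matrix (Fin (m + 3)) (Fin (m + 3)) ℝ := Matrix.of fun i j => dist (q i) (q j)
      with hB
    set w : Fin (m + 2) → ℝ := fun i => v i.castSucc with hw
    set s : ℝ := v (Fin.last (m + 2)) with hs
    set u : Fin (m + 2) → ℝ := fun i => dist (p i) y with hu
    -- row equations
    have hrow : ∀ i : Fin (m + 2), (A *ᵥ w) i + s * u i = 0 := by
      intro i
      have h0 : (B *ᵥ v) i.castSucc = 0 := by rw [hveq]; rfl
      rw [Matrix.mulVec, dotProduct, Fin.sum_univ_castSucc] at h0
      have h1 : ∀ j : Fin (m + 2), B i.castSucc j.castSucc * v j.castSucc = A i j * w j := by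
        intro j
        congr 1
        show dist (q i.castSucc) (q j.castSucc) = _
        rw [hq, Fin.snoc_castSucc, Fin.snoc_castSucc]
        rfl
      rw [Finset.sum_congr rfl (fun j _ => h1 j)] at h0
      have h2 : B i.castSucc (Fin.last (m + 2)) * v (Fin.last (m + 2)) = s * u i := by
        show dist (q i.castSucc) (q (Fin.last (m + 2))) * _ = _
        rw [hq, Fin.snoc_castSucc, Fin.snoc_last]
        show dist (p i) y * s = s * u i
        rw [hu]; ring
      rw [h2] at h0
      exact h0
    have hlast : u ⬝ᵥ w = 0 := by
      have h0 : (B *ᵥ v) (Fin.last (m + 2)) = 0 := by rw [hveq]; rfl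
      rw [Matrix.mulVec, dotProduct, Fin.sum_univ_castSucc] at h0
      have h1 : ∀ j : Fin (m + 2), B (Fin.last (m + 2)) j.castSucc * v j.castSucc
          = u j * w j := by
        intro j
        show dist (q (Fin.last (m + 2))) (q j.castSucc) * _ = _
        rw [hq, Fin.snoc_castSucc, Fin.snoc_last]
        show dist y (p j) * v j.castSucc = u j * w j
        rw [hu, hw, dist_comm]
      rw [Finset.sum_congr rfl (fun j _ => h1 j)] at h0
      have h2 : B (Fin.last (m + 2)) (Fin.last (m + 2)) * v (Fin.last (m + 2)) = 0 := by
        show dist (q (Fin.last (m + 2))) (q (Fin.last (m + 2))) * _ = 0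
        rw [dist_self]; ring
      rw [h2, add_zero] at h0
      exact h0
    -- solve for w
    have hAw : A *ᵥ w = (-s) • u := by
      funext i
      have := hrow i
      simp only [Pi.smul_apply, smul_eq_mul]
      linarith
    have hwv : w = (-s) • (A⁻¹ *ᵥ u) := by
      have h1 : A⁻¹ *ᵥ (A *ᵥ w) = w := by
        rw [Matrix.mulVec_mulVec, Matrix.nonsing_inv_mul A hAunit, Matrix.one_mulVec]
      rw [← h1, hAw, Matrix.mulVec_smul]
    -- the key positivity claim
    set e0 : Fin (m + 2) → ℝ := Pi.single 0 1 with he0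
    set c : Fin (m + 2) → ℝ := fun i => A i 0 with hc
    set η : Fin (m + 2) → ℝ := fun i => u i - c i with hη
    have hce : A *ᵥ e0 = c := by
      funext i
      rw [Matrix.mulVec_single]
      simp [hc]
    have hinvc : A⁻¹ *ᵥ c = e0 := by
      rw [← hce, Matrix.mulVec_mulVec, Matrix.nonsing_inv_mul A hAunit, Matrix.one_mulVec]
    have hη0 : η 0 = dist y z := by
      rw [hη]
      show u 0 - c 0 = dist y z
      rw [hu, hc]
      show dist (p 0) y - dist (p 0) (p 0) = dist y z
      rw [dist_self, hp0, dist_comm]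
      ring
    have hηb : ∀ i, |η i| ≤ dist y z := by
      intro i
      rw [hη]
      show |u i - c i| ≤ dist y z
      rw [hu, hc]
      show |dist (p i) y - dist (p i) (p 0)| ≤ dist y z
      rw [hp0, dist_comm (p i) y, dist_comm (p i) z]
      exact abs_dist_sub_le y z (p i)
    -- decompose u = c + η
    have hu_dec : u = c + η := by funext i; simp [hη]
    have hterm1 : c ⬝ᵥ (A⁻¹ *ᵥ c) = 0 := by
      rw [hinvc, he0, dotProduct_single, mul_one, hc]
      show dist (p 0) (p 0) = 0
      exact dist_self _
    have hterm2 : η ⬝ᵥ (A⁻¹ *ᵥ c) = dist y z := by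
      rw [hinvc, he0, dotProduct_single, mul_one, hη0]
    have hterm3 : c ⬝ᵥ (A⁻¹ *ᵥ η) = dist y z := by
      rw [Matrix.dotProduct_mulVec]
      have h1 : c ᵥ* A⁻¹ = A⁻¹ *ᵥ c := by
        conv_lhs => rw [← hsymAinv]
        exact Matrix.vecMul_transpose A⁻¹ c
      rw [h1, hinvc, he0, single_dotProduct, one_mul, hη0]
    have hterm4 : |η ⬝ᵥ (A⁻¹ *ᵥ η)| ≤ M * (dist y z * dist y z) := by
      calc |η ⬝ᵥ (A⁻¹ *ᵥ η)| ≤ ∑ i, |η i * (A⁻¹ *ᵥ η) i| :=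
            Finset.abs_sum_le_sum_abs _ _
        _ ≤ ∑ i, ∑ j, |A⁻¹ i j| * (dist y z * dist y z) := by
            refine Finset.sum_le_sum fun i _ => ?_
            rw [abs_mul, Matrix.mulVec, dotProduct]
            calc |η i| * |∑ j, A⁻¹ i j * η j| ≤ |η i| * ∑ j, |A⁻¹ i j * η j| := by
                  refine mul_le_mul_of_nonneg_left (Finset.abs_sum_le_sum_abs _ _) (abs_nonneg _)
              _ = ∑ j, |η i| * |A⁻¹ i j * η j| := by rw [Finset.mul_sum]
              _ ≤ ∑ j, |A⁻¹ i j| * (dist y z * dist y z) := by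
                  refine Finset.sum_le_sum fun j _ => ?_
                  rw [abs_mul]
                  have h1 := hηb i
                  have h2 := hηb j
                  have h3 : (0:ℝ) ≤ |η i| := abs_nonneg _
                  have h4 : (0:ℝ) ≤ |η j| := abs_nonneg _
                  have h5 : (0:ℝ) ≤ |A⁻¹ i j| := abs_nonneg _
                  have h6 : |η i| * |η j| ≤ dist y z * dist y z :=
                    mul_le_mul h1 h2 h4 dist_nonneg
                  calc |η i| * (|A⁻¹ i j| * |η j|) = |A⁻¹ i j| * (|η i| * |η j|) := by ring
                    _ ≤ |A⁻¹ i j| * (dist y z * dist y z) :=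
                        mul_le_mul_of_nonneg_left h6 h5
        _ = M * (dist y z * dist y z) := by
            rw [hM, Finset.sum_mul]
            exact Finset.sum_congr rfl fun i _ => by rw [Finset.sum_mul]
    have hpos : 0 < u ⬝ᵥ (A⁻¹ *ᵥ u) := by
      have hexp : u ⬝ᵥ (A⁻¹ *ᵥ u)
          = c ⬝ᵥ (A⁻¹ *ᵥ c) + c ⬝ᵥ (A⁻¹ *ᵥ η) + (η ⬝ᵥ (A⁻¹ *ᵥ c) + η ⬝ᵥ (A⁻¹ *ᵥ η)) := by
        rw [hu_dec, Matrix.mulVec_add, add_dotProduct, dotProduct_add,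
          dotProduct_add]
      rw [hexp, hterm1, hterm2, hterm3, zero_add]
      have hsmall : M * dist y z < 1 := by
        have h1 : dist y z < 1 / (M + 1) := hylt
        rw [div_eq_inv_mul, mul_one] at h1
        have h2 : (M + 1) * dist y z < (M + 1) * (M + 1)⁻¹ :=
          mul_lt_mul_of_pos_left h1 (by linarith)
        rw [mul_inv_cancel₀ (by linarith : M + 1 ≠ 0)] at h2
        nlinarith [hρ]
      have h6 := abs_le.mp hterm4
      nlinarith [hρ]
    -- conclude
    have hs0 : s = 0 := by
      have h1 : u ⬝ᵥ ((-s) • (A⁻¹ *ᵥ u)) = 0 := by rw [← hwv]; exact hlast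
      rw [dotProduct_smul, smul_eq_mul] at h1
      rcases mul_eq_zero.mp h1 with h | h
      · linarith
      · exact absurd h (ne_of_gt hpos)
    have hwz : w = 0 := by
      rw [hwv, hs0]
      simp
    apply hv0
    funext i
    refine Fin.lastCases ?_ ?_ i
    · exact hs0
    · intro j
      have : w j = 0 := by rw [hwz]; rfl
      exact this
end Pts
section Key
variable {X : Type*} [MetricSpace X] [CompactSpace X] [MeasurableSpace X] [BorelSpace X]

lemma key [Infinite X] (μ₁ μ₂ : SignedMeasure X) (F : Finset C(X, ℝ)) :
    ∃ σ : SignedMeasure X,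
      (∀ f ∈ F, ∀ μ : SignedMeasure X, integSM (μ + σ) f = integSM μ f) ∧
      1 ≤ |Ibil (μ₁ + σ) (μ₂ + σ) - Ibil μ₁ μ₂| := by
  classical
  set k := F.card with hkdef
  obtain ⟨p, hdet⟩ := exists_inv_points (X := X) (2 * k)
  set D : Matrix (Fin (2 * k + 2)) (Fin (2 * k + 2)) ℝ :=
    Matrix.of fun i j => dist (p i) (p j) with hD
  have hsym : Dᵀ = D := by
    ext i j
    simp [hD, Matrix.transpose_apply, dist_comm]
  set g : Fin k → Fin (2 * k + 2) → ℝ := fun i j => (F.equivFin.symm i).1 (p j) with hg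
  obtain ⟨c, hortho, hQne⟩ := exists_good_c (le_refl (2 * k + 2)) D hsym hdet g
  set Q : ℝ := ∑ i, ∑ j, c i * c j * D i j with hQ
  set L : ℝ := ∑ j, c j * (integSM μ₁ (fun x => dist x (p j)) + dmu μ₂ (p j)) with hL
  set t : ℝ := (|L| + 1) / |Q| + 1 with ht
  have hQabs : (0:ℝ) < |Q| := abs_pos.mpr hQne
  have ht1 : 1 ≤ t := by
    rw [ht]
    have : 0 ≤ (|L| + 1) / |Q| := div_nonneg (by positivity) (le_of_lt hQabs)
    linarith
  have ht0 : 0 < t := lt_of_lt_of_le one_pos ht1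
  set a : Fin (2 * k + 2) → ℝ := fun j => t * c j with ha
  refine ⟨diracSM p a, ?_, ?_⟩
  · intro f hf μ
    rw [integSM_add_diracSM μ p a f.continuous]
    have h1 : ∑ j, c j * f (p j) = 0 := by
      have h2 := hortho (F.equivFin ⟨f, hf⟩)
      have h3 : ∀ j, g (F.equivFin ⟨f, hf⟩) j = f (p j) := by
        intro j
        rw [hg]
        simp only [Equiv.symm_apply_apply]
      rw [Finset.sum_congr rfl (fun j _ => by rw [h3 j])] at h2
      exact h2
    have h4 : ∑ j, a j * f (p j) = t * ∑ j, c j * f (p j) := by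
      rw [Finset.mul_sum]
      exact Finset.sum_congr rfl fun j _ => by rw [ha]; ring
    rw [h4, h1, mul_zero, add_zero]
  · rw [Ibil_expand μ₁ μ₂ p a]
    have hS12 : (∑ j, a j * integSM μ₁ (fun x => dist x (p j)))
        + (∑ i, a i * dmu μ₂ (p i)) = t * L := by
      rw [hL, Finset.mul_sum, ← Finset.sum_add_distrib]
      exact Finset.sum_congr rfl fun j _ => by rw [ha]; ring
    have hS3 : (∑ i, ∑ j, a i * a j * dist (p i) (p j)) = t ^ 2 * Q := by
      rw [hQ, Finset.mul_sum]
      refine Finset.sum_congr rfl fun i _ => ?_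
      rw [Finset.mul_sum]
      refine Finset.sum_congr rfl fun j _ => ?_
      have : D i j = dist (p i) (p j) := rfl
      rw [this, ha]; ring
    have hgoal : Ibil μ₁ μ₂ + (∑ j, a j * integSM μ₁ (fun x => dist x (p j)))
        + (∑ i, a i * dmu μ₂ (p i)) + (∑ i, ∑ j, a i * a j * dist (p i) (p j))
        - Ibil μ₁ μ₂ = t * L + t ^ 2 * Q := by
      rw [← hS12, ← hS3]; ring
    rw [hgoal]
    -- arithmetic
    have habs1 : |t ^ 2 * Q| = t ^ 2 * |Q| := by
      rw [abs_mul, abs_of_nonneg (by positivity : (0:ℝ) ≤ t ^ 2)]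
    have habs2 : |t * L| = t * |L| := by
      rw [abs_mul, abs_of_nonneg (le_of_lt ht0)]
    have htQ : t * |Q| = |L| + 1 + |Q| := by
      rw [ht, add_mul, div_mul_cancel₀ _ (ne_of_gt hQabs), one_mul]
    have hkey : |t ^ 2 * Q| - |t * L| ≤ |t ^ 2 * Q + t * L| := by
      have h := abs_sub_abs_le_abs_sub (t ^ 2 * Q) (-(t * L))
      rw [abs_neg, sub_neg_eq_add] at h
      exact h
    have hco : t * L + t ^ 2 * Q = t ^ 2 * Q + t * L := by ring
    rw [hco]
    have hL0 : 0 ≤ |L| := abs_nonneg _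
    have ht2 : t ^ 2 * |Q| = t * (t * |Q|) := by ring
    have hx : t ^ 2 * |Q| - t * |L| = t * (1 + |Q|) := by rw [ht2, htQ]; ring
    have hfin : 1 + |Q| ≤ t * (1 + |Q|) :=
      le_mul_of_one_le_left (by positivity) ht1
    linarith [hkey, habs1, habs2, hx, hfin]
end Key

/-- On an infinite compact metric space, `I(·)` is weak-* discontinuous at every
point of `M(X)`, and `I(·,·)` is discontinuous at every point of `M(X) × M(X)`
(with the product of the weak-* topologies). -/
theorem stmt_10 {X : Type*} [MetricSpace X] [CompactSpace X]
    [MeasurableSpace X] [BorelSpace X] [Infinite X] :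
    (∀ μ : SignedMeasure X,
      ¬ @ContinuousAt (SignedMeasure X) ℝ (weakStar X) _ Ien μ) ∧
    (∀ p : SignedMeasure X × SignedMeasure X,
      ¬ @ContinuousAt (SignedMeasure X × SignedMeasure X) ℝ
          (@instTopologicalSpaceProd _ _ (weakStar X) (weakStar X)) _
          (fun q => Ibil q.1 q.2) p) := by
  classical
  constructor
  · intro μ hcont
    have h1 : Ien ⁻¹' (Metric.ball (Ien μ) 1) ∈ @nhds _ (weakStar X) μ :=
      hcont (Metric.ball_mem_nhds _ one_pos)
    rw [show weakStar X = TopologicalSpace.induced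
        (fun μ : SignedMeasure X => fun f : C(X, ℝ) => integSM μ f) inferInstance from rfl,
      nhds_induced, Filter.mem_comap] at h1
    obtain ⟨V, hV, hVsub⟩ := h1
    rw [nhds_pi, Filter.mem_pi'] at hV
    obtain ⟨I, tso, htso, hIsub⟩ := hV
    obtain ⟨σ, hσ1, hσ2⟩ := key μ μ I
    have hmem : (fun f : C(X, ℝ) => integSM (μ + σ) f) ∈ (↑I : Set C(X, ℝ)).pi tso := by
      intro f hf
      show integSM (μ + σ) f ∈ tso f
      rw [hσ1 f (Finset.mem_coe.mp hf) μ]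
      exact mem_of_mem_nhds (htso f)
    have h2 := hVsub (hIsub hmem)
    rw [Set.mem_preimage, Metric.mem_ball, Real.dist_eq] at h2
    have h3 : Ien (μ + σ) - Ien μ = Ibil (μ + σ) (μ + σ) - Ibil μ μ := rfl
    rw [h3] at h2
    linarith [hσ2, h2]
  · rintro ⟨μ₁, μ₂⟩ hcont
    have h1 : (fun q : SignedMeasure X × SignedMeasure X => Ibil q.1 q.2) ⁻¹'
        (Metric.ball (Ibil μ₁ μ₂) 1) ∈
        @nhds _ (@instTopologicalSpaceProd _ _ (weakStar X) (weakStar X)) (μ₁, μ₂) :=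
      hcont (Metric.ball_mem_nhds _ one_pos)
    rw [@nhds_prod_eq _ _ (weakStar X) (weakStar X) μ₁ μ₂, Filter.mem_prod_iff] at h1
    obtain ⟨V₁, hV₁, V₂, hV₂, hsub⟩ := h1
    rw [show weakStar X = TopologicalSpace.induced
        (fun μ : SignedMeasure X => fun f : C(X, ℝ) => integSM μ f) inferInstance from rfl,
      nhds_induced, Filter.mem_comap] at hV₁ hV₂
    obtain ⟨W₁, hW₁, hW₁sub⟩ := hV₁
    obtain ⟨W₂, hW₂, hW₂sub⟩ := hV₂
    rw [nhds_pi, Filter.mem_pi'] at hW₁ hW₂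
    obtain ⟨I₁, ts₁, hts₁, hI₁⟩ := hW₁
    obtain ⟨I₂, ts₂, hts₂, hI₂⟩ := hW₂
    obtain ⟨σ, hσ1, hσ2⟩ := key μ₁ μ₂ (I₁ ∪ I₂)
    have hmem1 : (μ₁ + σ) ∈ V₁ := by
      apply hW₁sub
      apply hI₁
      intro f hf
      show integSM (μ₁ + σ) f ∈ ts₁ f
      rw [hσ1 f (Finset.mem_union_left _ (Finset.mem_coe.mp hf)) μ₁]
      exact mem_of_mem_nhds (hts₁ f)
    have hmem2 : (μ₂ + σ) ∈ V₂ := by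
      apply hW₂sub
      apply hI₂
      intro f hf
      show integSM (μ₂ + σ) f ∈ ts₂ f
      rw [hσ1 f (Finset.mem_union_right _ (Finset.mem_coe.mp hf)) μ₂]
      exact mem_of_mem_nhds (hts₂ f)
    have h2 := hsub (Set.mk_mem_prod hmem1 hmem2)
    rw [Set.mem_preimage, Metric.mem_ball, Real.dist_eq] at h2
    linarith [hσ2, h2]
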